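/- Let A be a real 2n×2n symmetric matrix and J the standard complex structure matrix on ℝ^{2n} (J² = −I). If the 'complexified (1,1)-part' of A, namely the matrix ¼(A + JᵀAJ) viewed as a Hermitian form on ℂ^n, is positive definite, then A has at most n negative eigenvalues (counted with multiplicity). -/

import Mathlib

open Matrix

theorem negOnSpan (ι : Type*) [Fintype ι] [DecidableEq ι] (A : Matrix ι ι ℝ) (hA : A.IsHermitian)
    (N : Finset ι) (hN : ∀ i ∈ N, hA.eigenvalues i < 0)
    (v : EuclideanSpace ℝ ι)
    (hv : v ∈ Submodule.span ℝ (Set.range fun i : N => hA.eigenvectorBasis i))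
    (hv0 : v ≠ 0) : v ⬝ᵥ A.mulVec v < 0 := by
  classical
  set b := hA.eigenvectorBasis with hb
  have hcoef : ∀ j ∉ N, (inner ℝ (b j) v : ℝ) = 0 := by
    intro j hj
    clear hv0
    induction hv using Submodule.span_induction with
    | mem x hx =>
      obtain ⟨i, rfl⟩ := hx
      exact b.orthonormal.2 (fun h => hj (h ▸ i.2))
    | zero => simp
    | add x y _ _ hx hy => rw [inner_add_right, hx, hy, add_zero]
    | smul a x _ hx => rw [inner_smul_right, hx, mul_zero]
  set c : ι → ℝ := fun i => (inner ℝ (b i) v : ℝ) with hc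
  -- the quadratic form as a sum
  have hib : ∀ i, (inner ℝ (b i) (WithLp.toLp 2 (A.mulVec v) : EuclideanSpace ℝ ι) : ℝ) = hA.eigenvalues i * c i := by
    intro i
    have h1 : (inner ℝ (b i) (WithLp.toLp 2 (A.mulVec v) : EuclideanSpace ℝ ι) : ℝ) = (b i) ⬝ᵥ (A.mulVec v) := by
      simp [PiLp.inner_apply, dotProduct, mul_comm]
    have h2 : (b i) ⬝ᵥ (A.mulVec v) = (A.mulVec (b i)) ⬝ᵥ v := by
      rw [dotProduct_mulVec, ← mulVec_transpose]
      congr 1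
      rw [show Aᵀ = A from (conjTranspose_eq_transpose_of_trivial A).symm.trans hA.eq]
    have h3 : A *ᵥ (b i) = hA.eigenvalues i • (b i) := hA.mulVec_eigenvectorBasis i
    rw [h1, h2, h3]
    simp [PiLp.inner_apply, dotProduct, c, Finset.mul_sum, mul_comm, mul_left_comm]
  have hsum : v ⬝ᵥ A.mulVec v = ∑ i, c i * (hA.eigenvalues i * c i) := by
    have h0 : v ⬝ᵥ A.mulVec v = (inner ℝ v (WithLp.toLp 2 (A.mulVec v) : EuclideanSpace ℝ ι) : ℝ) := by
      simp [PiLp.inner_apply, dotProduct, mul_comm]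
    rw [h0, ← b.sum_inner_mul_inner v (WithLp.toLp 2 (A.mulVec v) : EuclideanSpace ℝ ι)]
    refine Finset.sum_congr rfl fun i _ => ?_
    rw [hib i, real_inner_comm]
  have hex : ∃ i, c i ≠ 0 := by
    by_contra h
    push_neg at h
    apply hv0
    have : b.repr v = 0 := by
      ext i
      rw [b.repr_apply_apply]
      exact h i
    exact b.repr.map_eq_zero_iff.mp this
  obtain ⟨i₀, hi₀⟩ := hex
  have hi₀N : i₀ ∈ N := by
    by_contra h; exact hi₀ (hcoef i₀ h)
  rw [hsum]
  have : ∑ i : ι, (0:ℝ) = 0 := by simp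
  rw [← this]
  apply Finset.sum_lt_sum
  · intro i _
    by_cases hiN : i ∈ N
    · nlinarith [hN i hiN, sq_nonneg (c i), sq_abs (c i)]
    · have h0 : c i = 0 := hcoef i hiN
      rw [h0]; ring_nf; exact le_refl 0
  · exact ⟨i₀, Finset.mem_univ _, by nlinarith [hN i₀ hi₀N, (mul_self_pos).2 hi₀]⟩

/-- If the `(1,1)`-part `¼(A + JᵀAJ)` of a real symmetric `2n×2n` matrix `A`
is positive definite (as a quadratic form, equivalently as a Hermitian form on
`ℂⁿ`), then `A` has at most `n` negative eigenvalues. Here `J` is the standard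
complex structure on `ℝ^{2n} = ℝⁿ ⊕ ℝⁿ`. -/

theorem stmt18 (n : ℕ) (A : Matrix (Fin n ⊕ Fin n) (Fin n ⊕ Fin n) ℝ)
    (hA : A.IsHermitian)
    (J : Matrix (Fin n ⊕ Fin n) (Fin n ⊕ Fin n) ℝ)
    (hJ : J = Matrix.fromBlocks 0 (-1) 1 0)
    (hpos : ∀ v : Fin n ⊕ Fin n → ℝ, v ≠ 0 →
      0 < (1 / 4 : ℝ) * (v ⬝ᵥ (A + Jᵀ * A * J).mulVec v)) :
    (Finset.univ.filter fun i => hA.eigenvalues i < 0).card ≤ n := by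
  classical
  by_contra hcon
  push_neg at hcon
  set N : Finset (Fin n ⊕ Fin n) := Finset.univ.filter fun i => hA.eigenvalues i < 0 with hNdef
  have hN : ∀ i ∈ N, hA.eigenvalues i < 0 := fun i hi => (Finset.mem_filter.1 hi).2
  set b := hA.eigenvectorBasis with hb
  set W : Submodule ℝ (EuclideanSpace ℝ (Fin n ⊕ Fin n)) :=
    Submodule.span ℝ (Set.range fun i : N => b i) with hWdef
  have hWrank : Module.finrank ℝ W = N.card := by
    rw [hWdef]
    exact (finrank_span_eq_card
      ((b.orthonormal.linearIndependent).comp _ Subtype.val_injective)).trans (by simp)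
  have hJJ : J * J = -1 := by
    subst hJ
    rw [Matrix.fromBlocks_multiply]
    simp only [Matrix.zero_mul, Matrix.mul_zero, Matrix.neg_mul, Matrix.one_mul,
      Matrix.mul_one, Matrix.mul_neg, add_zero, zero_add, neg_zero]
    ext (i|i) (j|j) <;> simp [Matrix.one_apply]
  let Jlin : EuclideanSpace ℝ (Fin n ⊕ Fin n) →ₗ[ℝ] EuclideanSpace ℝ (Fin n ⊕ Fin n) :=
    { toFun := fun v => WithLp.toLp 2 (J *ᵥ v)
      map_add' := fun x y => by simp [Matrix.mulVec_add]
      map_smul' := fun a x => by simp [Matrix.mulVec_smul] }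
  set W' : Submodule ℝ (EuclideanSpace ℝ (Fin n ⊕ Fin n)) := W.map Jlin with hW'def
  have hWW : W'.map Jlin = W := by
    rw [hW'def, ← Submodule.map_comp]
    have hcomp : (Jlin ∘ₗ Jlin) = -LinearMap.id := by
      refine LinearMap.ext fun v => ?_
      show WithLp.toLp 2 (J *ᵥ (J *ᵥ v.ofLp)) = -v
      rw [Matrix.mulVec_mulVec, hJJ, Matrix.neg_mulVec, Matrix.one_mulVec]
      simp
    rw [hcomp]
    ext x
    constructor
    · rintro ⟨y, hy, rfl⟩
      exact W.neg_mem hy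
    · intro hx
      exact ⟨-x, W.neg_mem hx, by simp⟩
  have hW'rank : Module.finrank ℝ W' = N.card := by
    have h1 : Module.finrank ℝ W' ≤ Module.finrank ℝ W := Submodule.finrank_map_le _ _
    have h2 : Module.finrank ℝ W ≤ Module.finrank ℝ W' := by
      conv_lhs => rw [← hWW]
      exact Submodule.finrank_map_le _ _
    omega
  -- dimension count
  have hdim : 0 < Module.finrank ℝ (W ⊓ W' : Submodule ℝ (EuclideanSpace ℝ (Fin n ⊕ Fin n))) := by
    have hsum := Submodule.finrank_sup_add_finrank_inf_eq W W'
    have hle : Module.finrank ℝ (W ⊔ W' : Submodule ℝ (EuclideanSpace ℝ (Fin n ⊕ Fin n)))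
        ≤ Module.finrank ℝ (EuclideanSpace ℝ (Fin n ⊕ Fin n)) := Submodule.finrank_le _
    have hE : Module.finrank ℝ (EuclideanSpace ℝ (Fin n ⊕ Fin n)) = n + n := by
      rw [finrank_euclideanSpace]; simp
    omega
  -- pick a nonzero vector in the intersection
  have hbot : (W ⊓ W' : Submodule ℝ (EuclideanSpace ℝ (Fin n ⊕ Fin n))) ≠ ⊥ := by
    intro h
    rw [h, finrank_bot] at hdim
    exact lt_irrefl 0 hdim
  obtain ⟨v, hv, hv0⟩ := Submodule.ne_bot_iff _ |>.1 hbot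
  obtain ⟨hvW, hvW'⟩ := Submodule.mem_inf.1 hv
  obtain ⟨w, hwW, hwv⟩ := hvW'
  have hw0 : w ≠ 0 := by
    rintro rfl
    exact hv0 (by rw [← hwv]; simp)
  have h1 : v ⬝ᵥ A *ᵥ v < 0 := negOnSpan _ A hA N hN v hvW hv0
  have h2 : w ⬝ᵥ A *ᵥ w < 0 := negOnSpan _ A hA N hN w hwW hw0
  have hJv : J *ᵥ v = -w := by
    have hv' : (v : (Fin n ⊕ Fin n) → ℝ) = J *ᵥ w := congrArg WithLp.ofLp hwv.symm
    rw [hv', Matrix.mulVec_mulVec, hJJ, Matrix.neg_mulVec, Matrix.one_mulVec]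
  have hquad : v ⬝ᵥ (A + Jᵀ * A * J) *ᵥ v = v ⬝ᵥ A *ᵥ v + w ⬝ᵥ A *ᵥ w := by
    rw [Matrix.add_mulVec, dotProduct_add]
    congr 1
    calc v ⬝ᵥ (Jᵀ * A * J) *ᵥ v
        = v ⬝ᵥ Jᵀ *ᵥ (A *ᵥ (J *ᵥ v)) := by
          rw [Matrix.mulVec_mulVec, Matrix.mulVec_mulVec, Matrix.mul_assoc]
      _ = (J *ᵥ v) ⬝ᵥ (A *ᵥ (J *ᵥ v)) := by
          rw [Matrix.dotProduct_mulVec, Matrix.vecMul_transpose]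
      _ = w ⬝ᵥ A *ᵥ w := by
          rw [hJv]
          rw [Matrix.mulVec_neg, neg_dotProduct, dotProduct_neg, neg_neg]
  have := hpos v (fun h => hv0 (by simpa using congrArg (WithLp.toLp 2) h))
  rw [hquad] at this
  linarith
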